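/- arXiv:1710.00229 — 2 statements merged into one kernel-verified Lean document; each statement's English description precedes it below -/
import Mathlib

section
/- For the ARMAX process X_t = max{α X_{t−1}, (1−α)Z_t} with iid standard Fréchet Z_t, 0 ≤ α < 1, and x_ρ the (1−ρ)-quantile of X_1, the first hitting time satisfies P{T*(x_ρ) = j} = (1 − (1−ρ)^θ)(1−ρ)^{θ(j−2)+1} for j ≥ 2, where θ = 1−α. -/
open MeasureTheory ProbabilityTheory

/-- for the ARMAX process with iid standard Fréchet innovations,
P{T*(x_ρ) = j} = (1 − (1−ρ)^θ)(1−ρ)^{θ(j−2)+1} for j ≥ 2, θ = 1−α. -/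
theorem armax_first_hitting_time_distribution
    {Ω : Type*} [MeasurableSpace Ω] (μ : Measure Ω) [IsProbabilityMeasure μ]
    (Z X : ℕ → Ω → ℝ) (hZmeas : ∀ i, Measurable (Z i))
    (hindep : iIndepFun Z μ)
    (hZpos : ∀ i ω, 0 < Z i ω)
    (hfrechet : ∀ i, ∀ x : ℝ, 0 < x →
      (μ {ω | Z i ω ≤ x}).toReal = Real.exp (-(1 / x)))
    (α : ℝ) (hα0 : 0 ≤ α) (hα1 : α < 1)
    (hX0 : X 0 = Z 0)
    (hXrec : ∀ t ω, X (t + 1) ω = max (α * X t ω) ((1 - α) * Z (t + 1) ω))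
    (ρ xρ : ℝ) (hρ : 0 < ρ) (hρ1 : ρ < 1) (hxρ : 0 < xρ)
    (hquant : Real.exp (-(1 / xρ)) = 1 - ρ)
    (j : ℕ) (hj : 2 ≤ j) :
    (μ {ω | (∀ i, 1 ≤ i → i ≤ j - 1 → X i ω ≤ xρ) ∧ X j ω > xρ}).toReal
      = (1 - (1 - ρ) ^ (1 - α)) * (1 - ρ) ^ ((1 - α) * ((j : ℝ) - 2) + 1) := by
  have hθ : (0:ℝ) < 1 - α := by linarith
  -- positivity of X
  have hXpos : ∀ t ω, 0 < X t ω := by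
    intro t
    induction t with
    | zero => intro ω; rw [hX0]; exact hZpos 0 ω
    | succ n ih =>
      intro ω
      rw [hXrec]
      exact lt_of_lt_of_le (mul_pos hθ (hZpos _ ω)) (le_max_right _ _)
  have hαXle : ∀ t ω, α * X t ω ≤ X t ω := fun t ω =>
    mul_le_of_le_one_left (hXpos t ω).le hα1.le
  -- the target sets as intersection of independent events
  set C : ℕ → Set ℝ := fun i =>
    if i = j then Set.Ioi (xρ / (1 - α))
    else if i = 0 then {x | α * x ≤ xρ} else Set.Iic (xρ / (1 - α)) with hC
  have hCmeas : ∀ i, MeasurableSet (C i) := by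
    intro i
    rw [hC]
    dsimp only
    split
    · exact measurableSet_Ioi
    split
    · exact (measurable_id.const_mul α) measurableSet_Iic
    · exact measurableSet_Iic
  have hset : {ω | (∀ i, 1 ≤ i → i ≤ j - 1 → X i ω ≤ xρ) ∧ X j ω > xρ}
      = ⋂ i ∈ Finset.range (j + 1), Z i ⁻¹' C i := by
    ext ω
    simp only [Set.mem_setOf_eq, Set.mem_iInter, Finset.mem_range, Set.mem_preimage]
    have hmem : ∀ i, Z i ω ∈ C i ↔
        (if i = j then xρ < (1 - α) * Z i ω
         else if i = 0 then α * Z i ω ≤ xρ else (1 - α) * Z i ω ≤ xρ) := by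
      intro i
      rw [hC]
      dsimp only
      split
      · rw [Set.mem_Ioi, div_lt_iff₀ hθ, mul_comm]
      split
      · simp [Set.mem_setOf_eq]
      · rw [Set.mem_Iic, le_div_iff₀ hθ, mul_comm]
    constructor
    · rintro ⟨h1, h2⟩ i hi
      rw [hmem]
      have hj1 : j - 1 + 1 = j := by omega
      split
      · subst i
        -- X j > xρ and α X_{j-1} ≤ xρ
        have hXj : X j ω > xρ := h2
        rw [← hj1, hXrec] at hXj
        have hle : α * X (j-1) ω ≤ xρ :=
          le_trans (hαXle _ ω) (h1 (j-1) (by omega) le_rfl)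
        rcases lt_max_iff.mp hXj with h | h
        · linarith
        · rwa [hj1] at h
      rename_i hij
      split
      · subst i
        -- α Z 0 ≤ X 1 ≤ xρ
        have h1' : X 1 ω ≤ xρ := h1 1 le_rfl (by omega)
        rw [hXrec, hX0] at h1'
        exact le_trans (le_max_left _ _) h1'
      rename_i hi0
      -- 1 ≤ i ≤ j : (1-α) Z i ≤ X i ≤ xρ
      have hi1 : 1 ≤ i := by omega
      have hij' : i ≤ j - 1 := by omega
      have h1' : X i ω ≤ xρ := h1 i hi1 hij'
      have hii : i - 1 + 1 = i := by omega
      rw [← hii, hXrec, hii] at h1'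
      exact le_trans (le_max_right _ _) h1'
    · intro h
      have hA : α * Z 0 ω ≤ xρ := by
        have := (hmem 0).mp (h 0 (by omega))
        simpa [show (0:ℕ) ≠ j by omega] using this
      have hB : ∀ i, 1 ≤ i → i ≤ j - 1 → (1 - α) * Z i ω ≤ xρ := by
        intro i hi1 hij'
        have := (hmem i).mp (h i (by omega))
        simpa [show i ≠ j by omega, show i ≠ 0 by omega] using this
      have hCc : xρ < (1 - α) * Z j ω := by
        have := (hmem j).mp (h j (by omega))
        simpa using this
      have hXle : ∀ i, i ≤ j - 1 → 1 ≤ i → X i ω ≤ xρ := by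
        intro i
        induction i with
        | zero => omega
        | succ k ih =>
          intro hik _
          rw [hXrec]
          refine max_le ?_ (hB (k+1) (by omega) hik)
          rcases Nat.eq_zero_or_pos k with hk | hk
          · subst hk; rw [hX0]; exact hA
          · exact le_trans (hαXle _ ω) (ih (by omega) hk)
      refine ⟨fun i hi1 hij' => hXle i hij' hi1, ?_⟩
      have hj1 : j - 1 + 1 = j := by omega
      rw [← hj1, hXrec, hj1]
      exact lt_of_lt_of_le hCc (le_max_right _ _)
  -- independence factorization
  have hfact : μ (⋂ i ∈ Finset.range (j + 1), Z i ⁻¹' C i)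
      = ∏ i ∈ Finset.range (j + 1), μ (Z i ⁻¹' C i) := by
    refine hindep.meas_biInter fun i _ => ?_
    exact ⟨C i, hCmeas i, rfl⟩
  rw [hset, hfact, ENNReal.toReal_prod]
  -- compute each factor
  set a : ℝ := Real.exp (-(α / xρ)) with ha
  set b : ℝ := Real.exp (-((1 - α) / xρ)) with hb
  have hdivpos : 0 < xρ / (1 - α) := div_pos hxρ hθ
  have hbval : ∀ i, (μ (Z i ⁻¹' Set.Iic (xρ / (1 - α)))).toReal = b := by
    intro i
    have := hfrechet i (xρ / (1 - α)) hdivpos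
    rw [one_div_div] at this
    exact this
  have hfac : ∀ i ∈ Finset.range (j + 1), (μ (Z i ⁻¹' C i)).toReal
      = if i = j then 1 - b else if i = 0 then a else b := by
    intro i _
    rw [hC]
    dsimp only
    split
    · -- complement
      have hIoi : Z i ⁻¹' Set.Ioi (xρ / (1 - α)) = (Z i ⁻¹' Set.Iic (xρ / (1 - α)))ᶜ := by
        ext ω; simp [not_le]
      rw [hIoi, prob_compl_eq_one_sub ((hZmeas i) measurableSet_Iic),
        ENNReal.toReal_sub_of_le prob_le_one ENNReal.one_ne_top, ENNReal.toReal_one, hbval i]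
    split
    · -- i = 0 factor
      rcases eq_or_lt_of_le hα0 with hα | hα
      · have : {x : ℝ | α * x ≤ xρ} = Set.univ := by
          ext x; simp [← hα, hxρ.le]
        rw [this]
        simp [ha, ← hα]
      · have : {x : ℝ | α * x ≤ xρ} = Set.Iic (xρ / α) := by
          ext x; rw [Set.mem_setOf_eq, Set.mem_Iic, le_div_iff₀ hα, mul_comm]
        rw [this]
        have := hfrechet i (xρ / α) (div_pos hxρ hα)
        rw [one_div_div] at this
        exact this
    · exact hbval i
  rw [Finset.prod_congr rfl hfac]
  -- compute the product
  obtain ⟨k, rfl⟩ : ∃ k, j = k + 1 := ⟨j - 1, by omega⟩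
  have hk1 : 1 ≤ k := by omega
  rw [Finset.prod_range_succ]
  have hmid : ∀ i ∈ Finset.range (k + 1),
      (if i = k + 1 then 1 - b else if i = 0 then a else b)
        = if i = 0 then a else b := by
    intro i hi
    rw [Finset.mem_range] at hi
    rw [if_neg (by omega)]
  rw [Finset.prod_congr rfl hmid, Finset.prod_range_succ']
  have hconst : ∀ i ∈ Finset.range k, (if i + 1 = 0 then a else b) = b :=
    fun i _ => if_neg (Nat.succ_ne_zero i)
  rw [Finset.prod_congr rfl hconst, Finset.prod_const, Finset.card_range, if_pos rfl, if_pos rfl]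
  -- final algebra
  have hq : (0:ℝ) < 1 - ρ := by linarith
  have hlog : Real.log (1 - ρ) = -(1 / xρ) := by
    rw [← hquant, Real.log_exp]
  have hqpow : ∀ y : ℝ, (1 - ρ) ^ y = Real.exp (-(y / xρ)) := by
    intro y
    rw [Real.rpow_def_of_pos hq, hlog]
    ring_nf
  rw [hqpow, hqpow]
  simp only [ha, hb]
  rw [← Real.exp_nat_mul, ← Real.exp_add]
  have hAB : (k:ℝ) * -((1 - α) / xρ) + -(α / xρ)
      = -(((1 - α) * (((k+1:ℕ):ℝ) - 2) + 1) / xρ) := by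
    push_cast
    field_simp
    ring
  rw [hAB]
  ring
end

section
/- For the moving-maximum process X_t = max_{i=0..m} α_i Z_{t−i} with iid standard Fréchet Z_t, ordered coefficients α_0 ≥ α_1 ≥ ... ≥ α_m ≥ 0 summing to 1, the first hitting time of the quantile x_ρ satisfies P{T*(x_ρ)=j} = (1 − (1−ρ)^{α_0})(1−ρ)^{1+α_0(j−2)} for j ≥ 2. -/
open MeasureTheory ProbabilityTheory

/-- for the moving-maximum process X_t = max_{0≤i≤m} α_i Z_{t−i}
with iid standard Fréchet Z_t and α_0 ≥ α_1 ≥ ... ≥ α_m ≥ 0 summing to 1,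
P{T*(x_ρ)=j} = (1 − (1−ρ)^{α_0})(1−ρ)^{1+α_0(j−2)} for j ≥ 2. -/
theorem mm_first_hitting_time_distribution
    {Ω : Type*} [MeasurableSpace Ω] (μ : Measure Ω) [IsProbabilityMeasure μ]
    (Z : ℤ → Ω → ℝ) (hZmeas : ∀ i, Measurable (Z i))
    (hindep : iIndepFun Z μ)
    (hZpos : ∀ i ω, 0 < Z i ω)
    (hfrechet : ∀ i, ∀ x : ℝ, 0 < x →
      (μ {ω | Z i ω ≤ x}).toReal = Real.exp (-(1 / x)))
    (m : ℕ) (α : ℕ → ℝ)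
    (hord : ∀ i, i < m → α (i + 1) ≤ α i) (hαnn : 0 ≤ α m)
    (hsum : ∑ i ∈ Finset.range (m + 1), α i = 1)
    (X : ℤ → Ω → ℝ)
    (hX : ∀ t ω, X t ω =
      (Finset.range (m + 1)).sup' (Finset.nonempty_range_add_one)
        (fun i => α i * Z (t - i) ω))
    (ρ xρ : ℝ) (hρ : 0 < ρ) (hρ1 : ρ < 1) (hxρ : 0 < xρ)
    (hquant : Real.exp (-(1 / xρ)) = 1 - ρ)
    (j : ℕ) (hj : 2 ≤ j) :
    (μ {ω | (∀ i : ℕ, 1 ≤ i → i ≤ j - 1 → X i ω ≤ xρ) ∧ X j ω > xρ}).toReal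
      = (1 - (1 - ρ) ^ (α 0)) * (1 - ρ) ^ (1 + α 0 * ((j : ℝ) - 2)) := by
  classical
  have hm0 : (0 : ℤ) ≤ (m : ℤ) := Int.ofNat_nonneg m
  have hj2 : (2 : ℤ) ≤ (j : ℤ) := by exact_mod_cast hj
  have h1ρ : (0 : ℝ) < 1 - ρ := by linarith
  have hlog : Real.log (1 - ρ) = -(1 / xρ) := by rw [← hquant, Real.log_exp]
  -- antitonicity of α on [0, m]
  have hαle : ∀ a b : ℕ, a ≤ b → b ≤ m → α b ≤ α a := by
    intro a b hab hbm
    induction b with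
    | zero => simp_all
    | succ n ih =>
      rcases Nat.eq_or_lt_of_le hab with h | h
      · simp [h]
      · exact (hord n (by omega)).trans (ih (by omega) (by omega))
  have hαnn' : ∀ i, i ≤ m → 0 ≤ α i := fun i hi => hαnn.trans (hαle i m hi le_rfl)
  have hα0 : 0 < α 0 := by
    by_contra h
    push_neg at h
    have hle : ∑ i ∈ Finset.range (m + 1), α i ≤ 0 :=
      Finset.sum_nonpos fun i hi =>
        (hαle 0 i (Nat.zero_le _) (by simpa [Nat.lt_succ_iff] using hi)).trans h
    linarith
  -- probability of a single "≤" event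
  have hfact : ∀ (s : ℤ) (c : ℝ), 0 ≤ c →
      (μ {ω | c * Z s ω ≤ xρ}).toReal = (1 - ρ) ^ c := by
    intro s c hc
    rcases eq_or_lt_of_le hc with h | h
    · have : {ω | c * Z s ω ≤ xρ} = Set.univ := by
        ext ω; simp [← h, hxρ.le]
      rw [this, measure_univ, ← h, Real.rpow_zero]
      simp
    · have hset : {ω | c * Z s ω ≤ xρ} = {ω | Z s ω ≤ xρ / c} := by
        ext ω
        simp only [Set.mem_setOf_eq, le_div_iff₀ h]
        rw [mul_comm]
      rw [hset, hfrechet s _ (div_pos hxρ h), Real.rpow_def_of_pos h1ρ, hlog]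
      congr 1
      rw [one_div_div]
      field_simp
  -- the family of elementary events
  set E : ℤ → Set Ω := fun s =>
    if s = (j : ℤ) then {ω | xρ < α 0 * Z s ω}
    else if 1 ≤ s then {ω | α 0 * Z s ω ≤ xρ}
    else {ω | α (1 - s).toNat * Z s ω ≤ xρ} with hEdef
  -- the main set identity
  have hset : {ω | (∀ i : ℕ, 1 ≤ i → i ≤ j - 1 → X i ω ≤ xρ) ∧ X j ω > xρ}
      = ⋂ s ∈ Finset.Icc (1 - (m : ℤ)) (j : ℤ), E s := by
    ext ω
    simp only [Set.mem_setOf_eq, Set.mem_iInter]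
    constructor
    · rintro ⟨h1, h2⟩
      have hterm : ∀ n : ℕ, 1 ≤ n → n ≤ j - 1 → ∀ i, i ≤ m →
          α i * Z ((n : ℤ) - i) ω ≤ xρ := by
        intro n hn1 hn2 i hi
        have hmem : i ∈ Finset.range (m + 1) := Finset.mem_range.mpr (by omega)
        have := Finset.le_sup' (fun i => α i * Z ((n : ℤ) - i) ω) hmem
        calc α i * Z ((n : ℤ) - i) ω
            ≤ (Finset.range (m + 1)).sup' Finset.nonempty_range_add_one
              (fun i => α i * Z ((n : ℤ) - i) ω) := this
          _ = X (n : ℤ) ω := (hX (n : ℤ) ω).symm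
          _ ≤ xρ := h1 n hn1 hn2
      have hEup : ∀ s : ℤ, 1 ≤ s → s ≤ (j : ℤ) - 1 → α 0 * Z s ω ≤ xρ := by
        intro s hs1 hs2
        have hn : ((s.toNat : ℤ)) = s := Int.toNat_of_nonneg (by omega)
        have := hterm s.toNat (by omega) (by omega) 0 (Nat.zero_le _)
        simpa [hn] using this
      have hEdn : ∀ s : ℤ, 1 - (m : ℤ) ≤ s → s ≤ 0 →
          α (1 - s).toNat * Z s ω ≤ xρ := by
        intro s hs1 hs2
        have hz : (1 : ℤ) - ((1 - s).toNat : ℤ) = s := by omega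
        have := hterm 1 le_rfl (by omega) (1 - s).toNat (by omega)
        simp only [Nat.cast_one] at this
        rwa [hz] at this
      intro s hs
      rw [Finset.mem_Icc] at hs
      by_cases hsj : s = (j : ℤ)
      · subst hsj
        simp only [hEdef, if_pos rfl, Set.mem_setOf_eq]
        rw [hX] at h2
        rw [gt_iff_lt, Finset.lt_sup'_iff] at h2
        obtain ⟨i, hi, hlt⟩ := h2
        rw [Finset.mem_range, Nat.lt_succ_iff] at hi
        by_cases hi0 : i = 0
        · subst hi0; simpa using hlt
        · exfalso
          have hipos : 1 ≤ i := Nat.one_le_iff_ne_zero.mpr hi0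
          by_cases hge : 1 ≤ (j : ℤ) - i
          · have hle1 : α 0 * Z ((j : ℤ) - i) ω ≤ xρ := hEup _ hge (by omega)
            have : α i * Z ((j : ℤ) - i) ω ≤ α 0 * Z ((j : ℤ) - i) ω :=
              mul_le_mul_of_nonneg_right (hαle 0 i (Nat.zero_le _) hi)
                (hZpos _ ω).le
            linarith
          · have h0 : (j : ℤ) - i ≤ 0 := by omega
            have hle1 : α (1 - ((j : ℤ) - i)).toNat * Z ((j : ℤ) - i) ω ≤ xρ :=
              hEdn _ (by omega) h0
            have hk : (1 - ((j : ℤ) - i)).toNat ≤ i := by omega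
            have : α i * Z ((j : ℤ) - i) ω
                ≤ α (1 - ((j : ℤ) - i)).toNat * Z ((j : ℤ) - i) ω :=
              mul_le_mul_of_nonneg_right (hαle _ i hk hi) (hZpos _ ω).le
            linarith
      · simp only [hEdef, if_neg hsj]
        split_ifs with h1s
        · exact hEup s h1s (by omega)
        · exact hEdn s hs.1 (by omega)
    · intro hmem
      have hEup : ∀ s : ℤ, 1 ≤ s → s ≤ (j : ℤ) - 1 → α 0 * Z s ω ≤ xρ := by
        intro s h1 h2
        have := hmem s (Finset.mem_Icc.mpr ⟨by omega, by omega⟩)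
        simp only [hEdef] at this
        rwa [if_neg (by omega), if_pos h1] at this
      have hEdn : ∀ s : ℤ, 1 - (m : ℤ) ≤ s → s ≤ 0 →
          α (1 - s).toNat * Z s ω ≤ xρ := by
        intro s h1 h2
        have := hmem s (Finset.mem_Icc.mpr ⟨h1, by omega⟩)
        simp only [hEdef] at this
        rwa [if_neg (by omega), if_neg (by omega)] at this
      constructor
      · intro n hn1 hn2
        rw [hX]
        apply Finset.sup'_le
        intro i hi
        rw [Finset.mem_range, Nat.lt_succ_iff] at hi
        by_cases h : 1 ≤ (n : ℤ) - i
        · calc α i * Z ((n : ℤ) - i) ω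
              ≤ α 0 * Z ((n : ℤ) - i) ω :=
                mul_le_mul_of_nonneg_right (hαle 0 i (Nat.zero_le _) hi)
                  (hZpos _ ω).le
            _ ≤ xρ := hEup _ h (by omega)
        · have h0 : (n : ℤ) - i ≤ 0 := by omega
          calc α i * Z ((n : ℤ) - i) ω
              ≤ α (1 - ((n : ℤ) - i)).toNat * Z ((n : ℤ) - i) ω :=
                mul_le_mul_of_nonneg_right (hαle _ i (by omega) hi)
                  (hZpos _ ω).le
            _ ≤ xρ := hEdn _ (by omega) h0
      · have := hmem (j : ℤ) (Finset.mem_Icc.mpr ⟨by omega, le_rfl⟩)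
        simp only [hEdef, if_pos rfl, Set.mem_setOf_eq] at this
        rw [hX]
        have h0 := Finset.le_sup' (fun i => α i * Z ((j : ℤ) - i) ω)
          (Finset.mem_range.mpr (Nat.succ_pos m))
        simp only [Nat.cast_zero, sub_zero] at h0
        exact lt_of_lt_of_le this h0
  -- measurability of the elementary events w.r.t. the comap σ-algebras
  have hmeasE : ∀ s ∈ Finset.Icc (1 - (m : ℤ)) (j : ℤ),
      MeasurableSet[(inferInstance : MeasurableSpace ℝ).comap (Z s)] (E s) := by
    intro s _
    simp only [hEdef]
    split_ifs
    · exact ⟨{x | xρ < α 0 * x},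
        measurableSet_lt measurable_const (measurable_const.mul measurable_id), rfl⟩
    · exact ⟨{x | α 0 * x ≤ xρ},
        measurableSet_le (measurable_const.mul measurable_id) measurable_const, rfl⟩
    · exact ⟨{x | α (1 - s).toNat * x ≤ xρ},
        measurableSet_le (measurable_const.mul measurable_id) measurable_const, rfl⟩
  -- split off the index j
  have hjnot : (j : ℤ) ∉ Finset.Icc (1 - (m : ℤ)) ((j : ℤ) - 1) := by
    simp only [Finset.mem_Icc]; omega
  have hS : Finset.Icc (1 - (m : ℤ)) (j : ℤ)
      = insert (j : ℤ) (Finset.Icc (1 - (m : ℤ)) ((j : ℤ) - 1)) := by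
    ext s; simp only [Finset.mem_Icc, Finset.mem_insert]; omega
  rw [hset, hindep.meas_biInter hmeasE, hS, Finset.prod_insert hjnot,
    ENNReal.toReal_mul, ENNReal.toReal_prod]
  -- value of the j-th factor
  have hEj : (μ (E (j : ℤ))).toReal = 1 - (1 - ρ) ^ (α 0) := by
    have hEjset : E (j : ℤ) = {ω | α 0 * Z (j : ℤ) ω ≤ xρ}ᶜ := by
      simp only [hEdef, if_pos rfl]
      ext ω; simp [not_le]
    have hmeasle : MeasurableSet {ω | α 0 * Z (j : ℤ) ω ≤ xρ} :=
      measurableSet_le (measurable_const.mul (hZmeas _)) measurable_const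
    rw [hEjset, measure_compl hmeasle (measure_ne_top μ _), measure_univ,
      ENNReal.toReal_sub_of_le prob_le_one ENNReal.one_ne_top, ENNReal.toReal_one,
      hfact (j : ℤ) (α 0) hα0.le]
  rw [hEj]
  -- value of the other factors
  have hEs : ∀ s ∈ Finset.Icc (1 - (m : ℤ)) ((j : ℤ) - 1),
      (μ (E s)).toReal = (1 - ρ) ^ (if 1 ≤ s then α 0 else α (1 - s).toNat) := by
    intro s hs
    rw [Finset.mem_Icc] at hs
    simp only [hEdef]
    rw [if_neg (by omega)]
    split_ifs with h1s
    · exact hfact s (α 0) hα0.le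
    · exact hfact s _ (hαnn' _ (by omega))
  rw [Finset.prod_congr rfl hEs]
  -- product of rpow's is rpow of sum
  have hprodpow : ∀ (T : Finset ℤ) (g : ℤ → ℝ),
      ∏ s ∈ T, (1 - ρ) ^ (g s) = (1 - ρ) ^ (∑ s ∈ T, g s) := by
    intro T g
    induction T using Finset.induction with
    | empty => simp
    | insert _ _ h ih =>
      rw [Finset.prod_insert h, Finset.sum_insert h, ih, ← Real.rpow_add h1ρ]
  rw [hprodpow]
  -- compute the sum of exponents
  have hsplit : Finset.Icc (1 - (m : ℤ)) ((j : ℤ) - 1)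
      = Finset.Icc (1 - (m : ℤ)) 0 ∪ Finset.Icc 1 ((j : ℤ) - 1) := by
    ext s; simp only [Finset.mem_Icc, Finset.mem_union]; omega
  have hdisj : Disjoint (Finset.Icc (1 - (m : ℤ)) 0) (Finset.Icc 1 ((j : ℤ) - 1)) := by
    rw [Finset.disjoint_left]
    intro s hs hs'
    rw [Finset.mem_Icc] at hs hs'
    omega
  rw [hsplit, Finset.sum_union hdisj]
  -- first part of the sum
  have hs1 : ∑ s ∈ Finset.Icc (1 - (m : ℤ)) 0,
      (if 1 ≤ s then α 0 else α (1 - s).toNat) = 1 - α 0 := by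
    have h1 : ∑ s ∈ Finset.Icc (1 - (m : ℤ)) 0,
        (if 1 ≤ s then α 0 else α (1 - s).toNat)
        = ∑ k ∈ Finset.Icc 1 m, α k := by
      refine Finset.sum_nbij' (fun s => (1 - s).toNat) (fun k => 1 - (k : ℤ))
        ?_ ?_ ?_ ?_ ?_
      · intro a ha; rw [Finset.mem_Icc] at ha ⊢; omega
      · intro a ha; rw [Finset.mem_Icc] at ha ⊢; omega
      · intro a ha; rw [Finset.mem_Icc] at ha; omega
      · intro a ha; rw [Finset.mem_Icc] at ha; omega
      · intro a ha
        rw [Finset.mem_Icc] at ha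
        rw [if_neg (by omega)]
    have h2 : Finset.range (m + 1) = insert 0 (Finset.Icc 1 m) := by
      ext x; simp only [Finset.mem_range, Finset.mem_insert, Finset.mem_Icc]; omega
    rw [h2, Finset.sum_insert (by simp)] at hsum
    linarith [h1, hsum]
  -- second part of the sum
  have hs2 : ∑ s ∈ Finset.Icc (1 : ℤ) ((j : ℤ) - 1),
      (if 1 ≤ s then α 0 else α (1 - s).toNat) = ((j : ℝ) - 1) * α 0 := by
    have hc : ∀ s ∈ Finset.Icc (1 : ℤ) ((j : ℤ) - 1),
        (if 1 ≤ s then α 0 else α (1 - s).toNat) = α 0 := by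
      intro s hs
      rw [Finset.mem_Icc] at hs
      rw [if_pos hs.1]
    rw [Finset.sum_congr rfl hc, Finset.sum_const, Int.card_Icc, nsmul_eq_mul]
    congr 1
    rw [show ((j : ℤ) - 1 + 1 - 1).toNat = j - 1 by omega]
    rw [Nat.cast_sub (by omega)]
    simp
  rw [hs1, hs2]
  have harith : 1 - α 0 + ((j : ℝ) - 1) * α 0 = 1 + α 0 * ((j : ℝ) - 2) := by ring
  rw [harith]
end
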